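/- Let τ, c₀, c, A₀ > 0, and let α ∈ ℝ satisfy |mα|_T ≥ c₀|m|^{-τ} for every integer m ≠ 0. Let v₀, v₁ ∈ ℝ∖{0}, let χ be a smooth cutoff function with parameters δ, γ where 0 < δ ≤ min(1, |v₁|) and γ > 1, and set g(q) := χ(√(v₀²q₀²+v₁²q₁²))/(i v₀ q₀ + v₁ q₁) for q = (q₀,q₁) with q₀ ≠ 0. Let (a_m)_{m∈ℤ} be complex numbers with |a_m| ≤ A₀ e^{-c|m|}. Then for every M ≥ 1 there exist C > 0 and ε ∈ (0, 1/4], depending only on τ, c₀, c, A₀, v₀, v₁, δ, γ and M, such that for every q = (q₀,q₁) ∈ ℝ² with 0 < ‖q‖ ≤ ε and |q₀| ≥ ‖q‖^M: |Σ_{m∈ℤ∖{0}} a_m g(q₀, q₁ + mα)| ≤ C ‖q‖^{-1/2}. -/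

import Mathlib

noncomputable section

/-- The distance on the torus of length `2π`: `|x|_T = min_{n ∈ ℤ} |x + 2πn|`. -/
def torusDist (x : ℝ) : ℝ := ⨅ n : ℤ, |x + n * (2 * Real.pi)|

lemma torusDist_bdd (x : ℝ) : BddBelow (Set.range fun n : ℤ => |x + n * (2 * Real.pi)|) :=
  ⟨0, by rintro y ⟨n, rfl⟩; exact abs_nonneg _⟩

lemma torusDist_le_abs (x : ℝ) : torusDist x ≤ |x| := by
  have := ciInf_le (torusDist_bdd x) (0 : ℤ)
  simpa [torusDist] using this

lemma torusDist_sub_le (a b : ℝ) : torusDist a - |b| ≤ torusDist (a + b) := by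
  have : ∀ n : ℤ, torusDist a - |b| ≤ |a + b + n * (2 * Real.pi)| := by
    intro n
    have h1 : torusDist a ≤ |a + n * (2 * Real.pi)| := ciInf_le (torusDist_bdd a) n
    have h2 : |a + n * (2 * Real.pi)| ≤ |a + b + n * (2 * Real.pi)| + |b| := by
      have he : a + n * (2 * Real.pi) = (a + b + n * (2 * Real.pi)) + (-b) := by ring
      rw [he]
      exact (abs_add_le _ _).trans (by rw [abs_neg])
    linarith
  exact le_ciInf this

lemma summable_exp_neg_abs_int {c' : ℝ} (hc' : 0 < c') :
    Summable (fun m : ℤ => Real.exp (-c' * |(m : ℝ)|)) := by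
  apply Summable.of_nat_of_neg <;>
  · simp only [Int.cast_natCast, Int.cast_neg, abs_neg, Nat.abs_cast]
    simpa [mul_comm, neg_mul] using Real.summable_exp_nat_mul_iff.mpr (neg_lt_zero.mpr hc')

/-- The sum over nonzero harmonics of the quasi-periodic oscillation
amplitudes evaluated on the shifted regularized relativistic propagator is of order
`‖q‖^{-1/2}`, i.e. subleading with respect to the `m = 0` singularity. -/
theorem stmt18
    (τ c₀ c A₀ v₀ v₁ δ γ : ℝ)
    (hτ : 0 < τ) (hc₀ : 0 < c₀) (hc : 0 < c) (hA₀ : 0 < A₀)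
    (hv₀ : v₀ ≠ 0) (hv₁ : v₁ ≠ 0) (hδ0 : 0 < δ) (hδ : δ ≤ min 1 |v₁|) (hγ : 1 < γ)
    (M : ℝ) (hM : 1 ≤ M) :
    ∃ C > 0, ∃ ε : ℝ, 0 < ε ∧ ε ≤ 1 / 4 ∧
      ∀ α : ℝ, (∀ m : ℤ, m ≠ 0 → c₀ * |(m : ℝ)| ^ (-τ) ≤ torusDist ((m : ℝ) * α)) →
      ∀ χ : ℝ → ℝ, ContDiff ℝ (⊤ : ℕ∞) χ → (∀ x, χ (-x) = χ x) →
        (∀ x, 0 ≤ χ x ∧ χ x ≤ 1) → (∀ x, |x| ≤ δ / γ → χ x = 1) →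
        (∀ x, δ ≤ |x| → χ x = 0) →
      ∀ a : ℤ → ℂ, (∀ m : ℤ, ‖a m‖ ≤ A₀ * Real.exp (-c * |(m : ℝ)|)) →
      ∀ q : ℝ × ℝ, 0 < ‖q‖ → ‖q‖ ≤ ε → ‖q‖ ^ M ≤ |q.1| →
        (Summable fun m : {m : ℤ // m ≠ 0} =>
          a m.1 *
            ((χ (Real.sqrt (v₀ ^ 2 * q.1 ^ 2 + v₁ ^ 2 * (q.2 + (m.1 : ℝ) * α) ^ 2)) : ℂ) /
              (Complex.I * (v₀ : ℂ) * (q.1 : ℂ) +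
                (v₁ : ℂ) * ((q.2 + (m.1 : ℝ) * α : ℝ) : ℂ)))) ∧
        ‖∑' m : {m : ℤ // m ≠ 0},
            a m.1 *
              ((χ (Real.sqrt (v₀ ^ 2 * q.1 ^ 2 + v₁ ^ 2 * (q.2 + (m.1 : ℝ) * α) ^ 2)) : ℂ) /
                (Complex.I * (v₀ : ℂ) * (q.1 : ℂ) +
                  (v₁ : ℂ) * ((q.2 + (m.1 : ℝ) * α : ℝ) : ℂ)))‖ ≤
          C * ‖q‖ ^ (-(1 / 2) : ℝ) := by
  -- constants
  set c' : ℝ := c / 2 with hc'def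
  have hc' : 0 < c' := by positivity
  set n : ℕ := ⌈2 * τ * M⌉₊ with hndef
  set B : ℝ := c' * c₀ ^ ((1 : ℝ) / τ) with hBdef
  have hB : 0 < B := by
    have : (0 : ℝ) < c₀ ^ ((1 : ℝ) / τ) := Real.rpow_pos_of_pos hc₀ _
    positivity
  set D₂ : ℝ := (Nat.factorial n : ℝ) / B ^ n with hD₂def
  have hD₂ : 0 < D₂ := by positivity
  set D : ℝ := max (2 / |v₁|) (D₂ / |v₀|) with hDdef
  have hv₀' : (0 : ℝ) < |v₀| := abs_pos.mpr hv₀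
  have hv₁' : (0 : ℝ) < |v₁| := abs_pos.mpr hv₁
  have hD : 0 < D := lt_of_lt_of_le (by positivity) (le_max_left _ _)
  have hS : Summable (fun m : ℤ => Real.exp (-c' * |(m : ℝ)|)) := summable_exp_neg_abs_int hc'
  set S : ℝ := ∑' m : ℤ, Real.exp (-c' * |(m : ℝ)|) with hSdef
  have hSpos : 0 < S :=
    hS.tsum_pos (fun m => (Real.exp_pos _).le) 0 (Real.exp_pos _)
  refine ⟨A₀ * D * S, by positivity, 1 / 4, by norm_num, le_refl _, ?_⟩
  intro α hα χ _ _ hχ01 _ _ a ha q hq0 hqε hqM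
  set t : ℝ := ‖q‖ with htdef
  have ht0 : 0 < t := hq0
  have ht4 : t ≤ 1 / 4 := hqε
  have ht1 : t ≤ 1 := ht4.trans (by norm_num)
  set u : ℝ := t ^ ((1 : ℝ) / 2) with hudef
  have hu0 : 0 < u := Real.rpow_pos_of_pos ht0 _
  have huu : u * u = t := by
    rw [hudef, ← Real.rpow_add ht0]
    norm_num
  have hu_half : u ≤ 1 / 2 := by
    have h14 : ((1 : ℝ) / 4) ^ ((1 : ℝ) / 2) = 1 / 2 := by
      rw [show (1 / 4 : ℝ) = (1 / 2 : ℝ) ^ (2 : ℕ) by norm_num, ← Real.rpow_natCast,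
        ← Real.rpow_mul (by norm_num)]
      norm_num
    calc u = t ^ ((1 : ℝ) / 2) := rfl
      _ ≤ (1 / 4 : ℝ) ^ ((1 : ℝ) / 2) := Real.rpow_le_rpow ht0.le ht4 (by norm_num)
      _ = 1 / 2 := h14
  have htu : t ≤ u / 2 := by
    calc t = u * u := huu.symm
      _ ≤ u * (1 / 2) := mul_le_mul_of_nonneg_left hu_half hu0.le
      _ = u / 2 := by ring
  have hu_inv : u⁻¹ = t ^ (-(1 / 2) : ℝ) := by
    rw [Real.rpow_neg ht0.le]
  have hone_le : (1 : ℝ) ≤ t ^ (-(1 / 2) : ℝ) := by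
    have := Real.rpow_le_rpow_of_exponent_ge ht0 ht1 (by norm_num : (-(1 / 2) : ℝ) ≤ 0)
    rwa [Real.rpow_zero] at this
  have htM_pos : 0 < t ^ M := Real.rpow_pos_of_pos ht0 _
  have hq1 : t ^ M ≤ |q.1| := hqM
  have hq1pos : 0 < |q.1| := lt_of_lt_of_le htM_pos hq1
  have hMn : M ≤ (n : ℝ) / (2 * τ) := by
    have hceil : 2 * τ * M ≤ (n : ℝ) := Nat.le_ceil _
    rw [le_div_iff₀ (by positivity : (0 : ℝ) < 2 * τ)]
    linarith
  -- the key pointwise bound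
  have key : ∀ m : {m : ℤ // m ≠ 0},
      ‖a m.1 *
            ((χ (Real.sqrt (v₀ ^ 2 * q.1 ^ 2 + v₁ ^ 2 * (q.2 + (m.1 : ℝ) * α) ^ 2)) : ℂ) /
              (Complex.I * (v₀ : ℂ) * (q.1 : ℂ) +
                (v₁ : ℂ) * ((q.2 + (m.1 : ℝ) * α : ℝ) : ℂ)))‖ ≤
        (A₀ * D * t ^ (-(1 / 2) : ℝ)) * Real.exp (-c' * |(m.1 : ℝ)|) := by
    rintro ⟨m, hm⟩
    set x : ℝ := q.2 + (m : ℝ) * α with hxdef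
    set z : ℂ := Complex.I * (v₀ : ℂ) * (q.1 : ℂ) + (v₁ : ℂ) * (x : ℝ) with hzdef
    have hzim : z.im = v₀ * q.1 := by simp [hzdef]
    have hzre : z.re = v₁ * x := by simp [hzdef]
    have hz_im : |v₀| * |q.1| ≤ ‖z‖ := by
      have := Complex.abs_im_le_norm z
      rw [hzim, abs_mul] at this
      simpa using this
    have hz_re : |v₁| * |x| ≤ ‖z‖ := by
      have := Complex.abs_re_le_norm z
      rw [hzre, abs_mul] at this
      simpa using this
    have hz_pos : 0 < ‖z‖ := lt_of_lt_of_le (mul_pos hv₀' hq1pos) hz_im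
    set s : ℝ := Real.sqrt (v₀ ^ 2 * q.1 ^ 2 + v₁ ^ 2 * x ^ 2) with hsdef
    have hχb : ‖(χ s : ℂ)‖ ≤ 1 := by
      rw [Complex.norm_real, Real.norm_eq_abs, abs_le]
      exact ⟨by linarith [(hχ01 s).1], (hχ01 s).2⟩
    have hterm : ‖a m * ((χ s : ℂ) / z)‖ ≤ A₀ * Real.exp (-c * |(m : ℝ)|) / ‖z‖ := by
      rw [norm_mul, norm_div]
      calc ‖a m‖ * (‖(χ s : ℂ)‖ / ‖z‖)
          ≤ (A₀ * Real.exp (-c * |(m : ℝ)|)) * (1 / ‖z‖) := by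
            have h1 := ha m
            gcongr
        _ = A₀ * Real.exp (-c * |(m : ℝ)|) / ‖z‖ := by ring
    have hexp_le : Real.exp (-c * |(m : ℝ)|) ≤ Real.exp (-c' * |(m : ℝ)|) := by
      apply Real.exp_le_exp.mpr
      have hcc : c' ≤ c := by rw [hc'def]; linarith
      have := mul_le_mul_of_nonneg_right hcc (abs_nonneg (m : ℝ))
      linarith
    refine hterm.trans ?_
    by_cases hcase : u ≤ torusDist ((m : ℝ) * α)
    · -- regular harmonics: |x| ≥ u/2
      have hq2 : |q.2| ≤ u / 2 := by
        have : |q.2| ≤ t := by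
          have := norm_snd_le q
          simpa [Real.norm_eq_abs] using this
        linarith
      have hx_lb : u / 2 ≤ |x| := by
        have h1 := torusDist_sub_le ((m : ℝ) * α) q.2
        have h2 : torusDist ((m : ℝ) * α + q.2) ≤ |(m : ℝ) * α + q.2| := torusDist_le_abs _
        have h3 : (m : ℝ) * α + q.2 = x := by rw [hxdef]; ring
        rw [h3] at h1 h2
        linarith
      have hz_lb : |v₁| * (u / 2) ≤ ‖z‖ :=
        le_trans (mul_le_mul_of_nonneg_left hx_lb hv₁'.le) hz_re
      calc A₀ * Real.exp (-c * |(m : ℝ)|) / ‖z‖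
          ≤ A₀ * Real.exp (-c' * |(m : ℝ)|) / (|v₁| * (u / 2)) :=
            div_le_div₀ (by positivity) (by gcongr) (by positivity) hz_lb
        _ = (A₀ * (2 / |v₁|) * u⁻¹) * Real.exp (-c' * |(m : ℝ)|) := by
            field_simp
        _ ≤ (A₀ * D * t ^ (-(1 / 2) : ℝ)) * Real.exp (-c' * |(m : ℝ)|) := by
            rw [hu_inv]
            gcongr
            exact le_max_left _ _
    · -- small-denominator harmonics: superpolynomial suppression
      push_neg at hcase
      have hdio := hα m hm
      have hmabs : (1 : ℝ) ≤ |(m : ℝ)| := by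
        have h1 : (1 : ℤ) ≤ |m| := Int.one_le_abs hm
        calc (1 : ℝ) ≤ ((|m| : ℤ) : ℝ) := by exact_mod_cast h1
          _ = |(m : ℝ)| := by push_cast; ring
      have hm0 : (0 : ℝ) < |(m : ℝ)| := lt_of_lt_of_le one_pos hmabs
      have h1 : c₀ * |(m : ℝ)| ^ (-τ) ≤ u := le_of_lt (lt_of_le_of_lt hdio hcase)
      have h2 : c₀ / u ≤ |(m : ℝ)| ^ τ := by
        rw [Real.rpow_neg (abs_nonneg _)] at h1
        rw [div_le_iff₀ hu0]
        have hmτ : (0 : ℝ) < |(m : ℝ)| ^ τ := Real.rpow_pos_of_pos hm0 _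
        calc c₀ = c₀ * (|(m : ℝ)| ^ τ)⁻¹ * |(m : ℝ)| ^ τ := by field_simp
          _ ≤ u * |(m : ℝ)| ^ τ := by gcongr
          _ = |(m : ℝ)| ^ τ * u := mul_comm _ _
      have h3 : (c₀ / u) ^ ((1 : ℝ) / τ) ≤ |(m : ℝ)| := by
        have h := Real.rpow_le_rpow (by positivity) h2 (by positivity : (0 : ℝ) ≤ 1 / τ)
        rwa [← Real.rpow_mul (abs_nonneg _), mul_one_div, div_self hτ.ne',
          Real.rpow_one] at h
      have h4 : (c₀ / u) ^ ((1 : ℝ) / τ)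
          = c₀ ^ ((1 : ℝ) / τ) * t ^ (-(1 / (2 * τ)) : ℝ) := by
        rw [Real.div_rpow hc₀.le hu0.le, hudef, ← Real.rpow_mul ht0.le, div_eq_mul_inv,
          ← Real.rpow_neg ht0.le]
        congr 2
        field_simp
      set y : ℝ := B * t ^ (-(1 / (2 * τ)) : ℝ) with hydef
      have htexp_pos : (0 : ℝ) < t ^ (-(1 / (2 * τ)) : ℝ) := Real.rpow_pos_of_pos ht0 _
      have hy0 : 0 < y := by positivity
      have hy_le : y ≤ c' * |(m : ℝ)| := by
        rw [hydef, hBdef]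
        have h5 : c₀ ^ ((1 : ℝ) / τ) * t ^ (-(1 / (2 * τ)) : ℝ) ≤ |(m : ℝ)| := by
          rw [← h4]; exact h3
        calc c' * c₀ ^ ((1 : ℝ) / τ) * t ^ (-(1 / (2 * τ)) : ℝ)
            = c' * (c₀ ^ ((1 : ℝ) / τ) * t ^ (-(1 / (2 * τ)) : ℝ)) := by ring
          _ ≤ c' * |(m : ℝ)| := by gcongr
      have hyn : (0 : ℝ) < y ^ n := by positivity
      have hexp_y : Real.exp (-y) ≤ (Nat.factorial n : ℝ) / y ^ n := by
        have h := Real.pow_div_factorial_le_exp y hy0.le n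
        have hfac : (0 : ℝ) < (Nat.factorial n : ℝ) := by positivity
        have h2 := (div_le_iff₀ hfac).mp h
        rw [Real.exp_neg, inv_eq_one_div, div_le_div_iff₀ (Real.exp_pos y) hyn]
        calc 1 * y ^ n = y ^ n := one_mul _
          _ ≤ Real.exp y * (Nat.factorial n : ℝ) := h2
          _ = (Nat.factorial n : ℝ) * Real.exp y := mul_comm _ _
      have hT_pos : (0 : ℝ) < t ^ ((n : ℝ) / (2 * τ)) := Real.rpow_pos_of_pos ht0 _
      have hyn_eq : y ^ n = B ^ n * (t ^ ((n : ℝ) / (2 * τ)))⁻¹ := by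
        rw [hydef, mul_pow, ← Real.rpow_natCast (t ^ (-(1 / (2 * τ)) : ℝ)) n,
          ← Real.rpow_mul ht0.le, ← Real.rpow_neg ht0.le]
        congr 2
        field_simp
      have hexp_y2 : Real.exp (-y) ≤ D₂ * t ^ ((n : ℝ) / (2 * τ)) := by
        refine hexp_y.trans (le_of_eq ?_)
        rw [hyn_eq, hD₂def]
        field_simp
      have hexp_y3 : Real.exp (-y) ≤ D₂ * t ^ M := by
        exact hexp_y2.trans (mul_le_mul_of_nonneg_left
          (Real.rpow_le_rpow_of_exponent_ge ht0 ht1 hMn) hD₂.le)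
      have hzM : |v₀| * t ^ M ≤ ‖z‖ := le_trans (by gcongr) hz_im
      have hexp_split : Real.exp (-c * |(m : ℝ)|)
          ≤ Real.exp (-c' * |(m : ℝ)|) * Real.exp (-y) := by
        rw [← Real.exp_add]
        apply Real.exp_le_exp.mpr
        have he : -c * |(m : ℝ)| = -c' * |(m : ℝ)| + -c' * |(m : ℝ)| := by
          rw [hc'def]; ring
        rw [he]
        linarith
      calc A₀ * Real.exp (-c * |(m : ℝ)|) / ‖z‖
          ≤ A₀ * (Real.exp (-c' * |(m : ℝ)|) * (D₂ * t ^ M)) / (|v₀| * t ^ M) := by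
            refine div_le_div₀ (by positivity) ?_ (by positivity) hzM
            have h7 : Real.exp (-c' * |(m : ℝ)|) * Real.exp (-y)
                ≤ Real.exp (-c' * |(m : ℝ)|) * (D₂ * t ^ M) :=
              mul_le_mul_of_nonneg_left hexp_y3 (Real.exp_nonneg _)
            exact mul_le_mul_of_nonneg_left (hexp_split.trans h7) hA₀.le
        _ = (A₀ * (D₂ / |v₀|)) * Real.exp (-c' * |(m : ℝ)|) := by
            field_simp
        _ ≤ (A₀ * D * t ^ (-(1 / 2) : ℝ)) * Real.exp (-c' * |(m : ℝ)|) := by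
            have h6 : A₀ * (D₂ / |v₀|) ≤ A₀ * D * t ^ (-(1 / 2) : ℝ) := by
              calc A₀ * (D₂ / |v₀|) ≤ A₀ * D := by
                    gcongr
                    exact le_max_right _ _
                _ = A₀ * D * 1 := (mul_one _).symm
                _ ≤ A₀ * D * t ^ (-(1 / 2) : ℝ) := by gcongr
            exact mul_le_mul_of_nonneg_right h6 (Real.exp_nonneg _)
  -- assemble
  have hsub : Summable (fun m : {m : ℤ // m ≠ 0} => Real.exp (-c' * |(m.1 : ℝ)|)) :=
    hS.comp_injective Subtype.val_injective
  have hbound_sum : Summable (fun m : {m : ℤ // m ≠ 0} =>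
      (A₀ * D * t ^ (-(1 / 2) : ℝ)) * Real.exp (-c' * |(m.1 : ℝ)|)) := hsub.mul_left _
  have hnorm_sum : Summable (fun m : {m : ℤ // m ≠ 0} =>
      ‖a m.1 *
          ((χ (Real.sqrt (v₀ ^ 2 * q.1 ^ 2 + v₁ ^ 2 * (q.2 + (m.1 : ℝ) * α) ^ 2)) : ℂ) /
            (Complex.I * (v₀ : ℂ) * (q.1 : ℂ) +
              (v₁ : ℂ) * ((q.2 + (m.1 : ℝ) * α : ℝ) : ℂ)))‖) :=
    Summable.of_nonneg_of_le (fun _ => norm_nonneg _) key hbound_sum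
  refine ⟨hnorm_sum.of_norm, ?_⟩
  have hsub_le : (∑' m : {m : ℤ // m ≠ 0}, Real.exp (-c' * |(m.1 : ℝ)|)) ≤ S :=
    hsub.tsum_le_tsum_of_inj Subtype.val Subtype.val_injective
      (fun k _ => (Real.exp_pos _).le) (fun m => le_rfl) hS
  calc ‖∑' m : {m : ℤ // m ≠ 0},
        a m.1 *
          ((χ (Real.sqrt (v₀ ^ 2 * q.1 ^ 2 + v₁ ^ 2 * (q.2 + (m.1 : ℝ) * α) ^ 2)) : ℂ) /
            (Complex.I * (v₀ : ℂ) * (q.1 : ℂ) +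
              (v₁ : ℂ) * ((q.2 + (m.1 : ℝ) * α : ℝ) : ℂ)))‖
      ≤ ∑' m : {m : ℤ // m ≠ 0},
          ‖a m.1 *
            ((χ (Real.sqrt (v₀ ^ 2 * q.1 ^ 2 + v₁ ^ 2 * (q.2 + (m.1 : ℝ) * α) ^ 2)) : ℂ) /
              (Complex.I * (v₀ : ℂ) * (q.1 : ℂ) +
                (v₁ : ℂ) * ((q.2 + (m.1 : ℝ) * α : ℝ) : ℂ)))‖ :=
        norm_tsum_le_tsum_norm hnorm_sum
    _ ≤ ∑' m : {m : ℤ // m ≠ 0},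
          (A₀ * D * t ^ (-(1 / 2) : ℝ)) * Real.exp (-c' * |(m.1 : ℝ)|) :=
        hnorm_sum.tsum_le_tsum key hbound_sum
    _ = (A₀ * D * t ^ (-(1 / 2) : ℝ)) *
          ∑' m : {m : ℤ // m ≠ 0}, Real.exp (-c' * |(m.1 : ℝ)|) := tsum_mul_left
    _ ≤ (A₀ * D * t ^ (-(1 / 2) : ℝ)) * S := by
        apply mul_le_mul_of_nonneg_left hsub_le
        positivity
    _ = A₀ * D * S * t ^ (-(1 / 2) : ℝ) := by ring

end
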